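/- Let G₁ be a telescopic group and G₂ a group possessing a finite-index subgroup H₂ with N_{G₂}(H₂) = H₂ (self-normalizing of finite index). Then the direct product G₁ × G₂ is telescopic. -/

import Mathlib

/-- A group `T` is telescopic if every finite group is realised as `N_T(H)/H`
for some finite-index subgroup `H ≤ T`. -/
def IsTelescopic (T : Type*) [Group T] : Prop :=
  ∀ (Γ : Type) [Group Γ] [Finite Γ],
    ∃ H : Subgroup T, H.FiniteIndex ∧
      Nonempty ((Subgroup.normalizer (H : Set T) ⧸ H.subgroupOf (Subgroup.normalizer (H : Set T))) ≃* Γ)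

lemma normalizer_prod {G₁ G₂ : Type*} [Group G₁] [Group G₂]
    (H₁ : Subgroup G₁) (H₂ : Subgroup G₂) :
    Subgroup.normalizer ((H₁.prod H₂ : Subgroup (G₁ × G₂)) : Set (G₁ × G₂)) = (Subgroup.normalizer (H₁ : Set G₁)).prod (Subgroup.normalizer (H₂ : Set G₂)) := by
  ext ⟨a, b⟩
  simp only [Subgroup.mem_normalizer_iff, Subgroup.mem_prod, Prod.forall]
  constructor
  · intro h
    constructor
    · intro x
      have := h x 1
      simp at this
      exact this
    · intro y
      have := h 1 y
      simp at this
      exact this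
  · rintro ⟨ha, hb⟩ x y
    simp [ha x, hb y]

/-- If `G₁` is telescopic and `G₂` has a self-normalizing finite-index subgroup,
then `G₁ × G₂` is telescopic. -/
theorem isTelescopic_prod {G₁ G₂ : Type*} [Group G₁] [Group G₂]
    (h₁ : IsTelescopic G₁) (H₂ : Subgroup G₂) (hfi : H₂.FiniteIndex)
    (hself : Subgroup.normalizer (H₂ : Set G₂) = H₂) :
    IsTelescopic (G₁ × G₂) := by
  intro Γ _ _
  obtain ⟨H₁, hfi₁, ⟨e⟩⟩ := h₁ Γ
  refine ⟨H₁.prod H₂, ?_, ?_⟩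
  · constructor
    rw [Subgroup.index_prod]
    exact mul_ne_zero hfi₁.index_ne_zero hfi.index_ne_zero
  · have hnorm : Subgroup.normalizer ((H₁.prod H₂ : Subgroup (G₁ × G₂)) : Set (G₁ × G₂)) = (Subgroup.normalizer (H₁ : Set G₁)).prod H₂ := by
      rw [normalizer_prod, hself]
    -- map from normalizer to N₁ ⧸ H₁'
    set N₁ := Subgroup.normalizer (H₁ : Set G₁)
    let f : Subgroup.normalizer ((H₁.prod H₂ : Subgroup (G₁ × G₂)) : Set (G₁ × G₂)) →* N₁ ⧸ H₁.subgroupOf N₁ :=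
      (QuotientGroup.mk' _).comp
        { toFun := fun g => ⟨g.1.1, by
            exact ((SetLike.ext_iff.mp hnorm g.1).mp g.2).1⟩
          map_one' := rfl
          map_mul' := fun a b => rfl }
    have hsurj : Function.Surjective f := by
      intro q
      obtain ⟨⟨n, hn⟩, rfl⟩ := QuotientGroup.mk_surjective q
      refine ⟨⟨(n, 1), ?_⟩, rfl⟩
      rw [hnorm]; exact ⟨hn, one_mem _⟩
    have hker : f.ker = (H₁.prod H₂).subgroupOf (Subgroup.normalizer ((H₁.prod H₂ : Subgroup (G₁ × G₂)) : Set (G₁ × G₂))) := by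
      ext ⟨⟨a, b⟩, hg⟩
      have hb : b ∈ H₂ := ((SetLike.ext_iff.mp hnorm _).mp hg).2
      simp only [MonoidHom.mem_ker, Subgroup.mem_subgroupOf, Subgroup.mem_prod]
      constructor
      · intro h
        have : (⟨a, _⟩ : N₁) ∈ H₁.subgroupOf N₁ := (QuotientGroup.eq_one_iff _).mp h
        exact ⟨this, hb⟩
      · rintro ⟨ha, -⟩
        exact (QuotientGroup.eq_one_iff _).mpr ha
    exact ⟨(QuotientGroup.quotientMulEquivOfEq hker.symm).trans
      ((QuotientGroup.quotientKerEquivOfSurjective f hsurj).trans e)⟩
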